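/- Let A be a Young function and let p ∈ (0,∞). Then lim_{t→0+} t^{1/p} · A^{-1}(1/t) = 0 if and only if lim_{t→∞} A(t)/t^p = ∞, where A^{-1}(τ) = inf{σ ≥ 0 : A(σ) ≥ τ} is the left-continuous inverse of A. -/

import Mathlib

open MeasureTheory Filter Set ENNReal

noncomputable section

/-- A Young function: a convex, non-decreasing, left-continuous function
`A : [0,∞] → [0,∞]` with `A(0) = 0`, `A(0+) = 0` and `A(∞) = ∞`. -/
structure YoungFunction where
  toFun : ℝ≥0∞ → ℝ≥0∞
  map_zero : toFun 0 = 0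
  tendsto_zero : Filter.Tendsto toFun (nhdsWithin 0 (Set.Ioi 0)) (nhds 0)
  mono : Monotone toFun
  convex' : ∀ s t c : ℝ≥0∞, c ≤ 1 →
    toFun (c * s + (1 - c) * t) ≤ c * toFun s + (1 - c) * toFun t
  left_continuous : ∀ t : ℝ≥0∞, 0 < t → toFun t = ⨆ s ∈ Set.Iio t, toFun s
  map_top : toFun ⊤ = ⊤

/-- Left-continuous inverse of a non-decreasing function `F : [0,∞] → [0,∞]`:
`F⁻¹(t) = inf {τ ≥ 0 : F(τ) ≥ t}`. -/
def leftInvE (F : ℝ≥0∞ → ℝ≥0∞) (t : ℝ≥0∞) : ℝ≥0∞ :=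
  sInf {τ : ℝ≥0∞ | t ≤ F τ}

/-- `a` is the right-continuous derivative of the Young function `A`:
`a` is non-decreasing, right-continuous, `a(∞) = ∞`, and
`A(t) = ∫₀ᵗ a(s) ds` for all finite `t ≥ 0`. -/
def IsYoungDerivative (A : YoungFunction) (a : ℝ≥0∞ → ℝ≥0∞) : Prop :=
  Monotone a ∧ a ⊤ = ⊤ ∧
    (∀ t : ℝ≥0∞, t ≠ ⊤ → Filter.Tendsto a (nhdsWithin t (Set.Ioi t)) (nhds (a t))) ∧
    ∀ t : ℝ, 0 ≤ t →
      A.toFun (ENNReal.ofReal t) = ∫⁻ s in Set.Ioc (0:ℝ) t, a (ENNReal.ofReal s)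

/-- The Young conjugate `B̃(t) = sup {s·t − B(s) : s ∈ [0,∞]}`. -/
def youngConj (A : YoungFunction) (t : ℝ≥0∞) : ℝ≥0∞ :=
  ⨆ s : ℝ≥0∞, s * t - A.toFun s

variable {R : Type*} [MeasurableSpace R]

/-- The distribution function `f₊(λ) = μ({x : |f(x)| > λ})`. -/
def distFn (μ : Measure R) (f : R → ℝ) (lam : ℝ≥0∞) : ℝ≥0∞ :=
  μ {x | lam < ENNReal.ofReal |f x|}

/-- The non-increasing rearrangement `f*(t) = inf {λ ≥ 0 : f₊(λ) ≤ t}`. -/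
def rearr (μ : Measure R) (f : R → ℝ) (t : ℝ≥0∞) : ℝ≥0∞ :=
  sInf {lam : ℝ≥0∞ | distFn μ f lam ≤ t}

/-- The Lorentz functional `‖f‖_{p,q}` for `p, q ∈ (0,∞]`. -/
def lorentzNorm (μ : Measure R) (p q : ℝ≥0∞) (f : R → ℝ) : ℝ≥0∞ :=
  if q = ⊤ then
    ⨆ t : Set.Ioi (0:ℝ), ENNReal.ofReal t.1 ^ (p⁻¹).toReal * rearr μ f (ENNReal.ofReal t.1)
  else
    (∫⁻ t in Set.Ioi (0:ℝ),
        (ENNReal.ofReal t ^ (p⁻¹).toReal * rearr μ f (ENNReal.ofReal t)) ^ q.toReal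
          / ENNReal.ofReal t) ^ (q⁻¹).toReal

/-- The Luxemburg norm `‖f‖_A = inf {λ > 0 : ∫ A(|f|/λ) dμ ≤ 1}`. -/
def luxNorm (μ : Measure R) (A : YoungFunction) (f : R → ℝ) : ℝ≥0∞ :=
  sInf {lam : ℝ≥0∞ | 0 < lam ∧ ∫⁻ x, A.toFun (ENNReal.ofReal |f x| / lam) ∂μ ≤ 1}

/-- The measure `μ` is non-atomic: every set of positive measure has a subset
of strictly smaller positive measure. -/
def NonAtomic (μ : Measure R) : Prop :=
  ∀ s : Set R, MeasurableSet s → 0 < μ s →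
    ∃ t, t ⊆ s ∧ MeasurableSet t ∧ 0 < μ t ∧ μ t < μ s

/-- The almost-compact embedding `X ↪* Y`, for (quasi)norm functionals `NX`, `NY`:
`X ⊂ Y` and for every sequence of measurable sets `Eₙ` whose characteristic
functions tend to `0` a.e., `sup_{‖f‖_X ≤ 1} ‖f χ_{Eₙ}‖_Y → 0`. -/
def AlmostCompactEmbedding (μ : Measure R) (NX NY : (R → ℝ) → ℝ≥0∞) : Prop :=
  (∀ f : R → ℝ, Measurable f → NX f < ⊤ → NY f < ⊤) ∧
    ∀ E : ℕ → Set R, (∀ n, MeasurableSet (E n)) →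
      (∀ᵐ x ∂μ, Filter.Tendsto (fun n => (E n).indicator (fun _ => (1:ℝ)) x)
        Filter.atTop (nhds 0)) →
      Filter.Tendsto
        (fun n => ⨆ f : {f : R → ℝ // Measurable f ∧ NX f ≤ 1},
          NY ((E n).indicator f.1)) Filter.atTop (nhds 0)

/-- The continuous embedding `X ↪ Y`: there is `C > 0` with `‖f‖_Y ≤ C ‖f‖_X`. -/
def NormEmbedding (μ : Measure R) (NX NY : (R → ℝ) → ℝ≥0∞) : Prop :=
  ∃ C : ℝ, 0 < C ∧ ∀ f : R → ℝ, Measurable f → NY f ≤ ENNReal.ofReal C * NX f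
/-- For a Young function `A` and `p ∈ (0,∞)`:
`lim_{t→0+} t^{1/p} A⁻¹(1/t) = 0` iff `lim_{t→∞} A(t)/t^p = ∞`,
where `A⁻¹` is the left-continuous inverse of `A`. -/
theorem tendsto_inv_rearrangement_iff
    (A : YoungFunction) (p : ℝ) (hp : 0 < p) :
    Filter.Tendsto
        (fun t : ℝ => ENNReal.ofReal t ^ (1 / p) * leftInvE A.toFun (ENNReal.ofReal t)⁻¹)
        (nhdsWithin 0 (Set.Ioi 0)) (nhds 0) ↔
      Filter.Tendsto (fun t : ℝ => A.toFun (ENNReal.ofReal t) / ENNReal.ofReal t ^ p)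
        Filter.atTop (nhds ⊤) := by
  have hp' : p ≠ 0 := hp.ne'
  constructor
  · intro hL
    rw [ENNReal.tendsto_nhds_top_iff_nnreal]
    intro n
    set c : ℝ := ((n : ℝ) + 1) ^ (1 / p) with hc
    have hn0 : (0:ℝ) ≤ (n:ℝ) := n.coe_nonneg
    have hc0 : 0 < c := Real.rpow_pos_of_pos (by positivity) _
    set e : ℝ := (2 * c)⁻¹ with he
    have he0 : 0 < e := by positivity
    have hmap : Tendsto (fun w : ℝ => (2 * e / w) ^ p) atTop (nhdsWithin 0 (Set.Ioi 0)) := by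
      apply tendsto_nhdsWithin_of_tendsto_nhds_of_eventually_within
      · have h1 : Tendsto (fun w : ℝ => 2 * e / w) atTop (nhds 0) :=
          tendsto_const_nhds.div_atTop tendsto_id
        have h2 : Tendsto (fun x : ℝ => x ^ p) (nhds 0) (nhds 0) := by
          have := (Real.continuousAt_rpow_const 0 p (Or.inr hp.le)).tendsto
          simpa [Real.zero_rpow hp'] using this
        exact h2.comp h1
      · filter_upwards [eventually_gt_atTop 0] with w hw
        exact Real.rpow_pos_of_pos (by positivity) _
    have hL' := ENNReal.tendsto_nhds_zero.mp hL (ENNReal.ofReal e)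
      (by simpa using he0)
    filter_upwards [hmap.eventually hL', eventually_gt_atTop 0] with w hw hw0
    have hq0 : 0 < 2 * e / w := by positivity
    have h1 : ENNReal.ofReal ((2 * e / w) ^ p) = ENNReal.ofReal (2 * e / w) ^ p :=
      (ENNReal.ofReal_rpow_of_pos hq0).symm
    have h2 : (ENNReal.ofReal (2 * e / w) ^ p) ^ (1 / p) = ENNReal.ofReal (2 * e / w) := by
      rw [← ENNReal.rpow_mul, mul_one_div_cancel hp', ENNReal.rpow_one]
    have h3 : (ENNReal.ofReal (2 * e / w) ^ p)⁻¹ = ENNReal.ofReal (c * w) ^ p := by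
      rw [← ENNReal.inv_rpow, ← ENNReal.ofReal_inv_of_pos hq0]
      congr 2
      rw [he]
      field_simp
    rw [h1, h2, h3] at hw
    -- hw : ofReal (2e/w) * leftInvE A (ofReal (c*w) ^ p) ≤ ofReal e
    have hne0 : ENNReal.ofReal (2 * e / w) ≠ 0 := by
      simp [ENNReal.ofReal_eq_zero, not_le, hq0]
    have hle : leftInvE A.toFun (ENNReal.ofReal (c * w) ^ p)
        ≤ ENNReal.ofReal e / ENNReal.ofReal (2 * e / w) := by
      rw [ENNReal.le_div_iff_mul_le (Or.inl hne0) (Or.inl ENNReal.ofReal_ne_top), mul_comm]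
      exact hw
    have hdiv : ENNReal.ofReal e / ENNReal.ofReal (2 * e / w) = ENNReal.ofReal (w / 2) := by
      rw [← ENNReal.ofReal_div_of_pos hq0]
      congr 1
      field_simp
    have hlt : leftInvE A.toFun (ENNReal.ofReal (c * w) ^ p) < ENNReal.ofReal w := by
      refine (hle.trans_lt ?_)
      rw [hdiv]
      exact (ENNReal.ofReal_lt_ofReal_iff hw0).mpr (by linarith)
    obtain ⟨τ, hτmem, hτlt⟩ := sInf_lt_iff.mp hlt
    have hs : ENNReal.ofReal (c * w) ^ p ≤ A.toFun (ENNReal.ofReal w) :=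
      le_trans hτmem (A.mono hτlt.le)
    have hEq : ENNReal.ofReal (c * w) ^ p
        = ENNReal.ofReal ((n : ℝ) + 1) * ENNReal.ofReal w ^ p := by
      rw [ENNReal.ofReal_rpow_of_pos (by positivity : (0:ℝ) < c * w),
        ENNReal.ofReal_rpow_of_pos hw0, ← ENNReal.ofReal_mul (by positivity)]
      congr 1
      rw [Real.mul_rpow hc0.le hw0.le, hc, ← Real.rpow_mul (by positivity),
        one_div_mul_cancel hp', Real.rpow_one]
    have hwp0 : ENNReal.ofReal w ^ p ≠ 0 :=
      (ENNReal.rpow_pos (by simpa using hw0) ENNReal.ofReal_ne_top).ne'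
    have hwpt : ENNReal.ofReal w ^ p ≠ ⊤ :=
      ENNReal.rpow_ne_top_of_nonneg hp.le ENNReal.ofReal_ne_top
    have h4 : ENNReal.ofReal ((n : ℝ) + 1)
        ≤ A.toFun (ENNReal.ofReal w) / ENNReal.ofReal w ^ p := by
      rw [ENNReal.le_div_iff_mul_le (Or.inl hwp0) (Or.inl hwpt), ← hEq]
      exact hs
    refine lt_of_lt_of_le ?_ h4
    rw [ENNReal.ofReal_add hn0 zero_le_one, ENNReal.ofReal_one, ENNReal.ofReal_coe_nnreal]
    exact ENNReal.lt_add_right ENNReal.coe_ne_top one_ne_zero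
  · intro hR
    rw [ENNReal.tendsto_nhds_zero]
    intro ε hε
    set εm : ℝ≥0∞ := min 1 ε with hεm
    have hεm0 : 0 < εm := lt_min one_pos hε
    have hεmt : εm ≠ ⊤ := (min_le_left _ _).trans_lt (by norm_num) |>.ne
    set r : ℝ := εm.toReal with hr
    have hr0 : 0 < r := ENNReal.toReal_pos hεm0.ne' hεmt
    have hre : ENNReal.ofReal r = εm := ENNReal.ofReal_toReal hεmt
    have hRr0 : ENNReal.ofReal r ≠ 0 := by simp [ENNReal.ofReal_eq_zero, not_le, hr0]
    set M : ℝ≥0∞ := (ENNReal.ofReal r)⁻¹ ^ p with hM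
    have hMlt : M < ⊤ :=
      ENNReal.rpow_lt_top_of_nonneg hp.le (ENNReal.inv_ne_top.mpr hRr0)
    have hev : ∀ᶠ u in atTop,
        M ≤ A.toFun (ENNReal.ofReal u) / ENNReal.ofReal u ^ p :=
      hR.eventually (eventually_ge_nhds hMlt)
    have hmap : Tendsto (fun t : ℝ => r / t ^ (1 / p)) (nhdsWithin 0 (Set.Ioi 0)) atTop := by
      have h1 : Tendsto (fun t : ℝ => t ^ (1 / p)) (nhdsWithin 0 (Set.Ioi 0))
          (nhdsWithin 0 (Set.Ioi 0)) := by
        apply tendsto_nhdsWithin_of_tendsto_nhds_of_eventually_within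
        · have h := ((Real.continuousAt_rpow_const 0 (1 / p)
            (Or.inr (by positivity))).tendsto).mono_left
            (nhdsWithin_le_nhds (s := Set.Ioi (0:ℝ)))
          simpa [one_div, Real.zero_rpow (show p⁻¹ ≠ 0 by positivity)] using h
        · filter_upwards [self_mem_nhdsWithin] with t ht
          exact Real.rpow_pos_of_pos ht _
      have h2 : Tendsto (fun x : ℝ => r / x) (nhdsWithin 0 (Set.Ioi 0)) atTop := by
        simpa [div_eq_mul_inv] using tendsto_inv_nhdsGT_zero.const_mul_atTop hr0
      exact h2.comp h1
    filter_upwards [hmap.eventually hev, self_mem_nhdsWithin] with t hA ht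
    have ht0 : (0:ℝ) < t := ht
    have htp : 0 < t ^ (1 / p) := Real.rpow_pos_of_pos ht0 _
    set u : ℝ := r / t ^ (1 / p) with hu
    have hu0 : 0 < u := by positivity
    have hup0 : ENNReal.ofReal u ^ p ≠ 0 :=
      (ENNReal.rpow_pos (by simpa using hu0) ENNReal.ofReal_ne_top).ne'
    have hupt : ENNReal.ofReal u ^ p ≠ ⊤ :=
      ENNReal.rpow_ne_top_of_nonneg hp.le ENNReal.ofReal_ne_top
    have hA' : M * ENNReal.ofReal u ^ p ≤ A.toFun (ENNReal.ofReal u) :=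
      (ENNReal.le_div_iff_mul_le (Or.inl hup0) (Or.inl hupt)).mp hA
    have htpE : ENNReal.ofReal (t ^ (1 / p)) ^ p = ENNReal.ofReal t := by
      rw [ENNReal.ofReal_rpow_of_pos htp, ← Real.rpow_mul ht0.le,
        one_div_mul_cancel hp', Real.rpow_one]
    have ha0 : ENNReal.ofReal r ^ p ≠ 0 :=
      (ENNReal.rpow_pos (by simpa using hr0) ENNReal.ofReal_ne_top).ne'
    have hat : ENNReal.ofReal r ^ p ≠ ⊤ :=
      ENNReal.rpow_ne_top_of_nonneg hp.le ENNReal.ofReal_ne_top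
    have hMul : M * ENNReal.ofReal u ^ p = (ENNReal.ofReal t)⁻¹ := by
      rw [hu, ENNReal.ofReal_div_of_pos htp, ENNReal.div_rpow_of_nonneg _ _ hp.le,
        htpE, hM, ENNReal.inv_rpow, div_eq_mul_inv, ← mul_assoc,
        ENNReal.inv_mul_cancel ha0 hat, one_mul]
    have hkey : (ENNReal.ofReal t)⁻¹ ≤ A.toFun (ENNReal.ofReal u) := hMul ▸ hA'
    have hinv : leftInvE A.toFun (ENNReal.ofReal t)⁻¹ ≤ ENNReal.ofReal u := sInf_le hkey
    have htpne0 : ENNReal.ofReal (t ^ (1 / p)) ≠ 0 := by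
      simpa [ENNReal.ofReal_eq_zero, not_le] using htp
    calc ENNReal.ofReal t ^ (1 / p) * leftInvE A.toFun (ENNReal.ofReal t)⁻¹
        ≤ ENNReal.ofReal t ^ (1 / p) * ENNReal.ofReal u := mul_le_mul_right hinv _
      _ = ENNReal.ofReal r := by
          rw [ENNReal.ofReal_rpow_of_pos ht0, hu, ENNReal.ofReal_div_of_pos htp,
            ENNReal.mul_div_cancel htpne0 ENNReal.ofReal_ne_top]
      _ ≤ ε := hre.trans_le (min_le_right 1 ε)
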